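/- For every index (b, j, x) with b ∈ {0,1}, 0 ≤ j ≤ 3q−1, 0 ≤ x ≤ N−1, the (b,j,x)-coordinate of the vector A^{−1} e_{(0,0,0)} is nonzero if and only if b = 1 and x = x_j. -/

import Mathlib

open Matrix

noncomputable section

/-- The step function underlying the permutation matrix `P`: it sends the index `(j, x)`
to `((j+1) mod 3q, π_{j+1}(x))` for `0 ≤ j < q`, to `(j+1, x)` for `q ≤ j < 2q`, and to
`((j+1) mod 3q, π_{3q−j}⁻¹(x))` for `2q ≤ j < 3q` (here `π` is 0-indexed). -/
def stepFn (q N : ℕ) (π : Fin q → Equiv.Perm (Fin N)) :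
    Fin (3 * q) × Fin N → Fin (3 * q) × Fin N := fun p =>
  if h : (p.1 : ℕ) < q then
    (⟨((p.1 : ℕ) + 1) % (3 * q), Nat.mod_lt _ ((Nat.zero_le _).trans_lt p.1.isLt)⟩,
      π ⟨(p.1 : ℕ), h⟩ p.2)
  else if h2 : (p.1 : ℕ) < 2 * q then
    (⟨((p.1 : ℕ) + 1) % (3 * q), Nat.mod_lt _ ((Nat.zero_le _).trans_lt p.1.isLt)⟩, p.2)
  else
    (⟨((p.1 : ℕ) + 1) % (3 * q), Nat.mod_lt _ ((Nat.zero_le _).trans_lt p.1.isLt)⟩,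
      (π ⟨3 * q - 1 - (p.1 : ℕ), by have := p.1.isLt; omega⟩)⁻¹ p.2)

/-- The `3qN × 3qN` permutation matrix `P`, sending basis vector `e_{(j,x)}` to
`e_{stepFn (j,x)}`. -/
def permMat (q N : ℕ) (π : Fin q → Equiv.Perm (Fin N)) :
    Matrix (Fin (3 * q) × Fin N) (Fin (3 * q) × Fin N) ℂ :=
  Matrix.of fun r c => if r = stepFn q N π c then 1 else 0

/-- The inverse `P⁻¹` of the permutation matrix `P`, sending `e_{stepFn (j,x)}` to
`e_{(j,x)}`. -/
def permMatInv (q N : ℕ) (π : Fin q → Equiv.Perm (Fin N)) :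
    Matrix (Fin (3 * q) × Fin N) (Fin (3 * q) × Fin N) ℂ :=
  Matrix.of fun r c => if stepFn q N π r = c then 1 else 0

/-- The `6qN × 6qN` matrix
`A = (1+e^{−1/q})⁻¹ (|0⟩⟨1| ⊗ (I − e^{−1/q} P) + |1⟩⟨0| ⊗ (I − e^{−1/q} P⁻¹))`. -/
def qlspMat (q N : ℕ) (π : Fin q → Equiv.Perm (Fin N)) :
    Matrix (Fin 2 × Fin (3 * q) × Fin N) (Fin 2 × Fin (3 * q) × Fin N) ℂ :=
  Matrix.of fun r c =>
    ((((1 : ℝ) + Real.exp (-1 / q)) : ℝ) : ℂ)⁻¹ *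
      (if r.1 = 0 ∧ c.1 = 1 then
        ((1 : Matrix (Fin (3 * q) × Fin N) (Fin (3 * q) × Fin N) ℂ)
            - (Real.exp (-1 / q) : ℂ) • permMat q N π) r.2 c.2
      else if r.1 = 1 ∧ c.1 = 0 then
        ((1 : Matrix (Fin (3 * q) × Fin N) (Fin (3 * q) × Fin N) ℂ)
            - (Real.exp (-1 / q) : ℂ) • permMatInv q N π) r.2 c.2
      else 0)

/-- `chainPerm q N π j = π_j ∘ ⋯ ∘ π_2 ∘ π_1` (for `0 ≤ j ≤ q`; the chain stops growing
beyond `q`), with `chainPerm q N π 0` the identity permutation. -/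
def chainPerm (q N : ℕ) (π : Fin q → Equiv.Perm (Fin N)) : ℕ → Equiv.Perm (Fin N)
  | 0 => 1
  | (j + 1) => if h : j < q then π ⟨j, h⟩ * chainPerm q N π j else chainPerm q N π j

/-- `xvec q N hN π j = x_j`, defined by `x_j = Π_j(0)` for `0 ≤ j ≤ q`,
`x_j = Π_q(0)` for `q ≤ j ≤ 2q`, and `x_j = Π_{3q−j}(0)` for `2q ≤ j ≤ 3q−1`,
where `Π_j = π_j ∘ ⋯ ∘ π_2 ∘ π_1`. -/
def xvec (q N : ℕ) (hN : 0 < N) (π : Fin q → Equiv.Perm (Fin N)) (j : ℕ) : Fin N :=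
  if j ≤ q then chainPerm q N π j ⟨0, hN⟩
  else if j ≤ 2 * q then chainPerm q N π q ⟨0, hN⟩
  else chainPerm q N π (3 * q - j) ⟨0, hN⟩

namespace QLSPAux

/-- Cumulative permutation at stage `j` of the loop. -/
def Gp (q N : ℕ) (π : Fin q → Equiv.Perm (Fin N)) (j : ℕ) : Equiv.Perm (Fin N) :=
  chainPerm q N π (if j ≤ 2*q then min j q else 3*q - j)

lemma chainPerm_succ (q N : ℕ) (π : Fin q → Equiv.Perm (Fin N)) (j : ℕ) (h : j < q) :
    chainPerm q N π (j+1) = π ⟨j, h⟩ * chainPerm q N π j := by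
  rw [chainPerm, dif_pos h]

lemma Gp_early (q N : ℕ) (π : Fin q → Equiv.Perm (Fin N)) {j : ℕ} (h : j ≤ q) :
    Gp q N π j = chainPerm q N π j := by
  unfold Gp; rw [if_pos (by omega), Nat.min_eq_left h]

lemma Gp_mid (q N : ℕ) (π : Fin q → Equiv.Perm (Fin N)) {j : ℕ} (h : q ≤ j) (h2 : j ≤ 2*q) :
    Gp q N π j = chainPerm q N π q := by
  unfold Gp; rw [if_pos h2, Nat.min_eq_right h]

lemma Gp_late (q N : ℕ) (π : Fin q → Equiv.Perm (Fin N)) {j : ℕ} (h : 2*q ≤ j) :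
    Gp q N π j = chainPerm q N π (3*q - j) := by
  unfold Gp
  rcases eq_or_lt_of_le h with h' | h'
  · rw [if_pos (by omega), Nat.min_eq_right (by omega)]
    congr 1; omega
  · rw [if_neg (by omega)]

lemma xvec_eq_Gp (q N : ℕ) (hN : 0 < N) (π : Fin q → Equiv.Perm (Fin N)) (j : ℕ) :
    xvec q N hN π j = Gp q N π j ⟨0, hN⟩ := by
  unfold xvec
  rcases le_or_gt j q with h | h
  · rw [if_pos h, Gp_early q N π h]
  · rcases le_or_gt j (2*q) with h2 | h2
    · rw [if_neg (by omega), if_pos h2, Gp_mid q N π h.le h2]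
    · rw [if_neg (by omega), if_neg (by omega), Gp_late q N π (by omega)]

lemma step_Gp (q N : ℕ) (hq : 1 ≤ q) (π : Fin q → Equiv.Perm (Fin N)) {j : ℕ}
    (hj : j < 3*q) (x : Fin N) :
    stepFn q N π (⟨j, hj⟩, Gp q N π j x) =
      (⟨(j+1) % (3*q), Nat.mod_lt _ (by omega)⟩, Gp q N π ((j+1) % (3*q)) x) := by
  unfold stepFn
  dsimp only
  rcases lt_or_ge j q with h | h
  · rw [dif_pos h]
    have h1 : (j+1) % (3*q) = j+1 := Nat.mod_eq_of_lt (by omega)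
    simp only [h1]
    refine Prod.ext rfl ?_
    rw [Gp_early q N π h.le, Gp_early q N π (by omega), chainPerm_succ q N π j h]
    rfl
  · rcases lt_or_ge j (2*q) with h2 | h2
    · rw [dif_neg (by omega), dif_pos h2]
      have h1 : (j+1) % (3*q) = j+1 := Nat.mod_eq_of_lt (by omega)
      simp only [h1]
      refine Prod.ext rfl ?_
      rw [Gp_mid q N π h h2.le, Gp_mid q N π (by omega) (by omega)]
    · rw [dif_neg (by omega), dif_neg (by omega)]
      refine Prod.ext rfl ?_
      rw [Gp_late q N π h2]
      obtain ⟨m', hm'⟩ : ∃ m', 3*q - j = m'+1 := ⟨3*q - j - 1, by omega⟩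
      rw [hm', chainPerm_succ q N π m' (by omega)]
      have hidx : 3*q - 1 - j = m' := by omega
      dsimp only
      rcases eq_or_lt_of_le (show j+1 ≤ 3*q by omega) with he | hlt
      · have h1 : (j+1) % (3*q) = 0 := by rw [he, Nat.mod_self]
        simp only [h1]
        have : Gp q N π 0 = chainPerm q N π 0 := Gp_early q N π (by omega)
        rw [this]
        have hm0 : m' = 0 := by omega
        subst hm0
        simp only [hidx, Equiv.Perm.mul_apply]
        simp
      · have h1 : (j+1) % (3*q) = j+1 := Nat.mod_eq_of_lt hlt
        simp only [h1]
        rw [Gp_late q N π (by omega)]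
        have : 3*q - (j+1) = m' := by omega
        rw [this]
        simp only [hidx, Equiv.Perm.mul_apply]
        simp

lemma iterate_step_Gp (q N : ℕ) (hq : 1 ≤ q) (π : Fin q → Equiv.Perm (Fin N)) (k : ℕ)
    {j : ℕ} (hj : j < 3*q) (x : Fin N) :
    (stepFn q N π)^[k] (⟨j, hj⟩, Gp q N π j x) =
      (⟨(j+k) % (3*q), Nat.mod_lt _ (by omega)⟩, Gp q N π ((j+k) % (3*q)) x) := by
  induction k with
  | zero =>
      simp only [Function.iterate_zero, id_eq, Nat.add_zero]
      have : j % (3*q) = j := Nat.mod_eq_of_lt hj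
      simp only [this]
  | succ k ih =>
      rw [Function.iterate_succ_apply', ih,
        step_Gp q N hq π (Nat.mod_lt _ (by omega)) x]
      have h2 : ((j+k) % (3*q) + 1) % (3*q) = (j + (k+1)) % (3*q) := by
        rw [Nat.mod_add_mod, show j+k+1 = j+(k+1) by omega]
      simp only [h2]

lemma iterate_step_period (q N : ℕ) (hq : 1 ≤ q) (π : Fin q → Equiv.Perm (Fin N)) :
    (stepFn q N π)^[3*q] = id := by
  funext p
  obtain ⟨⟨j, hj⟩, y⟩ := p
  have hy : y = Gp q N π j ((Gp q N π j)⁻¹ y) := by simp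
  rw [hy, iterate_step_Gp q N hq π (3*q) hj]
  simp only [Nat.add_mod_right, Nat.mod_eq_of_lt hj, id_eq]

lemma permMat_pow_apply (q N : ℕ) (π : Fin q → Equiv.Perm (Fin N)) (k : ℕ)
    (r c : Fin (3*q) × Fin N) :
    ((permMat q N π)^k) r c = if r = (stepFn q N π)^[k] c then 1 else 0 := by
  induction k generalizing r c with
  | zero => simp [Matrix.one_apply, eq_comm]; congr
  | succ k ih =>
      rw [pow_succ, Matrix.mul_apply]
      have hPc : ∀ m, (permMat q N π) m c = if m = stepFn q N π c then 1 else 0 :=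
        fun m => rfl
      simp only [hPc, mul_ite, mul_one, mul_zero]
      rw [Finset.sum_ite_eq' Finset.univ (stepFn q N π c)
        (fun m => (permMat q N π ^ k) r m)]
      rw [if_pos (Finset.mem_univ _), ih, Function.iterate_succ_apply]

lemma permMatInv_pow_apply (q N : ℕ) (π : Fin q → Equiv.Perm (Fin N)) (k : ℕ)
    (r c : Fin (3*q) × Fin N) :
    ((permMatInv q N π)^k) r c = if (stepFn q N π)^[k] r = c then 1 else 0 := by
  induction k generalizing r c with
  | zero => simp [Matrix.one_apply]; congr
  | succ k ih =>
      rw [pow_succ', Matrix.mul_apply]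
      have hQr : ∀ m, (permMatInv q N π) r m = if stepFn q N π r = m then 1 else 0 :=
        fun m => rfl
      simp only [hQr, ite_mul, one_mul, zero_mul]
      rw [Finset.sum_ite_eq Finset.univ (stepFn q N π r)
        (fun m => (permMatInv q N π ^ k) m c)]
      rw [if_pos (Finset.mem_univ _), ih, Function.iterate_succ_apply]

lemma permMat_pow_period (q N : ℕ) (hq : 1 ≤ q) (π : Fin q → Equiv.Perm (Fin N)) :
    (permMat q N π)^(3*q) = 1 := by
  ext r c
  rw [permMat_pow_apply, iterate_step_period q N hq π, Matrix.one_apply]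
  simp

lemma permMatInv_pow_period (q N : ℕ) (hq : 1 ≤ q) (π : Fin q → Equiv.Perm (Fin N)) :
    (permMatInv q N π)^(3*q) = 1 := by
  ext r c
  rw [permMatInv_pow_apply, iterate_step_period q N hq π, Matrix.one_apply]
  simp

/-- The scalar `t = e^{-1/q}` as a complex number. -/
def tC (q : ℕ) : ℂ := (Real.exp (-1 / q) : ℂ)

lemma tC_ne_zero (q : ℕ) : tC q ≠ 0 := by
  simp [tC, Real.exp_ne_zero]

lemma one_sub_tC_pow_ne_zero (q : ℕ) (hq : 1 ≤ q) (n : ℕ) (hn : 1 ≤ n) :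
    (1 : ℂ) - (tC q)^n ≠ 0 := by
  have h1 : Real.exp (-1 / q) < 1 := by
    rw [Real.exp_lt_one_iff]
    have : (0:ℝ) < q := by exact_mod_cast hq
    exact div_neg_of_neg_of_pos (by norm_num) this
  have h0 : 0 < Real.exp (-1 / q) := Real.exp_pos _
  have hlt : Real.exp (-1 / q) ^ n < 1 := pow_lt_one₀ h0.le h1 (by omega)
  have : ((1 : ℝ) - Real.exp (-1/q) ^ n : ℝ) ≠ 0 := by nlinarith
  have hcast : (1 : ℂ) - (tC q)^n = (((1 : ℝ) - Real.exp (-1/q) ^ n : ℝ) : ℂ) := by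
    push_cast [tC]; ring
  rw [hcast]
  exact_mod_cast this

lemma onePlus_ne_zero (q : ℕ) : ((((1 : ℝ) + Real.exp (-1 / q)) : ℝ) : ℂ) ≠ 0 := by
  have : (0:ℝ) < 1 + Real.exp (-1/q) := by positivity
  exact_mod_cast this.ne'

/-- Geometric sum `∑_{k<3q} t^k P^k`. -/
def geomP (q N : ℕ) (π : Fin q → Equiv.Perm (Fin N)) :
    Matrix (Fin (3 * q) × Fin N) (Fin (3 * q) × Fin N) ℂ :=
  ∑ k ∈ Finset.range (3*q), (tC q)^k • (permMat q N π)^k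

/-- Geometric sum `∑_{k<3q} t^k (P⁻¹)^k`. -/
def geomQ (q N : ℕ) (π : Fin q → Equiv.Perm (Fin N)) :
    Matrix (Fin (3 * q) × Fin N) (Fin (3 * q) × Fin N) ℂ :=
  ∑ k ∈ Finset.range (3*q), (tC q)^k • (permMatInv q N π)^k

lemma one_sub_smul_mul_geom (n : ℕ) {M : Matrix (Fin (3 * q) × Fin N) (Fin (3 * q) × Fin N) ℂ}
    (t : ℂ) (hM : M ^ n = 1) :
    ((1 : Matrix (Fin (3 * q) × Fin N) (Fin (3 * q) × Fin N) ℂ) - t • M) *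
      (∑ k ∈ Finset.range n, t^k • M^k) = (1 - t^n) • 1 := by
  have hX : ∀ k, t^k • M^k = (t • M)^k := fun k => (smul_pow t M k).symm
  simp only [hX]
  have := mul_geom_sum (t • M) n
  have h2 : ((1 : Matrix (Fin (3 * q) × Fin N) (Fin (3 * q) × Fin N) ℂ) - t • M) *
      (∑ k ∈ Finset.range n, (t • M)^k) = -(((t • M) - 1) * ∑ k ∈ Finset.range n, (t • M)^k) := by
    rw [← neg_mul, neg_sub]
  rw [h2, this, smul_pow, hM, neg_sub, sub_smul, one_smul]

lemma key_geomP (hq : 1 ≤ q) :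
    ((1 : Matrix (Fin (3 * q) × Fin N) (Fin (3 * q) × Fin N) ℂ) - tC q • permMat q N π) *
      geomP q N π = (1 - (tC q)^(3*q)) • 1 :=
  one_sub_smul_mul_geom (3*q) (tC q) (permMat_pow_period q N hq π)

lemma key_geomQ (hq : 1 ≤ q) :
    ((1 : Matrix (Fin (3 * q) × Fin N) (Fin (3 * q) × Fin N) ℂ) - tC q • permMatInv q N π) *
      geomQ q N π = (1 - (tC q)^(3*q)) • 1 :=
  one_sub_smul_mul_geom (3*q) (tC q) (permMatInv_pow_period q N hq π)

/-- Explicit inverse of `qlspMat`. -/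
def invB (q N : ℕ) (π : Fin q → Equiv.Perm (Fin N)) :
    Matrix (Fin 2 × Fin (3 * q) × Fin N) (Fin 2 × Fin (3 * q) × Fin N) ℂ :=
  Matrix.of fun r c =>
    ((((1 : ℝ) + Real.exp (-1 / q)) : ℝ) : ℂ) * ((1 : ℂ) - (tC q)^(3*q))⁻¹ *
      (if r.1 = 1 ∧ c.1 = 0 then geomP q N π r.2 c.2
       else if r.1 = 0 ∧ c.1 = 1 then geomQ q N π r.2 c.2
       else 0)

lemma qlspMat_mul_invB (q N : ℕ) (hq : 1 ≤ q) (π : Fin q → Equiv.Perm (Fin N)) :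
    qlspMat q N π * invB q N π = 1 := by
  have hs := one_sub_tC_pow_ne_zero q hq (3*q) (by omega)
  have hc := onePlus_ne_zero q
  have htc : ((Real.exp (-1 / (q:ℝ)) : ℝ) : ℂ) = tC q := rfl
  set e : ℂ := ((((1 : ℝ) + Real.exp (-1 / q)) : ℝ) : ℂ) with he
  set s : ℂ := (1 : ℂ) - (tC q)^(3*q) with hsdef
  ext ⟨b, r⟩ ⟨b', c⟩
  rw [Matrix.mul_apply, Fintype.sum_prod_type, Fin.sum_univ_two]
  simp only [qlspMat, invB, Matrix.of_apply, htc]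
  have f01 : ((0:Fin 2) = 1) = False := by simp
  have f10 : ((1:Fin 2) = 0) = False := by simp
  fin_cases b <;> fin_cases b' <;>
    simp only [Fin.zero_eta, Fin.mk_one, Fin.isValue, f01, f10, and_true, and_false,
      true_and, false_and, if_true, if_false, ite_true, ite_false, and_self,
      mul_zero, zero_mul, Finset.sum_const_zero, add_zero, zero_add]
  · -- b = 0, b' = 0
    have hsum : ∑ m : Fin (3*q) × Fin N,
        e⁻¹ * (((1 : Matrix (Fin (3 * q) × Fin N) (Fin (3 * q) × Fin N) ℂ)
            - tC q • permMat q N π) r m) * (e * s⁻¹ * geomP q N π m c) =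
        e⁻¹ * (e * s⁻¹) *
          ((((1 : Matrix (Fin (3 * q) × Fin N) (Fin (3 * q) × Fin N) ℂ)
            - tC q • permMat q N π) * geomP q N π) r c) := by
      rw [Matrix.mul_apply, Finset.mul_sum]
      exact Finset.sum_congr rfl fun m _ => by ring
    rw [hsum, key_geomP hq, Matrix.smul_apply, Matrix.one_apply, Matrix.one_apply,
      smul_eq_mul]
    by_cases hrc : r = c
    · simp only [hrc, if_pos rfl, Prod.mk.injEq, and_true, if_pos rfl, true_and]
      have hs' : (1:ℂ) - tC q ^ (3*q) ≠ 0 := hs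
      field_simp
      exact hsdef.symm
    · rw [if_neg hrc, if_neg (by simp [Prod.ext_iff, hrc])]
      ring
  · -- b = 0, b' = 1
    simp [Matrix.one_apply, Prod.ext_iff]
  · -- b = 1, b' = 0
    simp [Matrix.one_apply, Prod.ext_iff]
  · -- b = 1, b' = 1
    have hsum : ∑ m : Fin (3*q) × Fin N,
        e⁻¹ * (((1 : Matrix (Fin (3 * q) × Fin N) (Fin (3 * q) × Fin N) ℂ)
            - tC q • permMatInv q N π) r m) * (e * s⁻¹ * geomQ q N π m c) =
        e⁻¹ * (e * s⁻¹) *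
          ((((1 : Matrix (Fin (3 * q) × Fin N) (Fin (3 * q) × Fin N) ℂ)
            - tC q • permMatInv q N π) * geomQ q N π) r c) := by
      rw [Matrix.mul_apply, Finset.mul_sum]
      exact Finset.sum_congr rfl fun m _ => by ring
    rw [hsum, key_geomQ hq, Matrix.smul_apply, Matrix.one_apply, Matrix.one_apply,
      smul_eq_mul]
    by_cases hrc : r = c
    · simp only [hrc, if_pos rfl, Prod.mk.injEq, and_true, if_pos rfl, true_and]
      have hs' : (1:ℂ) - tC q ^ (3*q) ≠ 0 := hs
      field_simp
      exact hsdef.symm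
    · rw [if_neg hrc, if_neg (by simp [Prod.ext_iff, hrc])]
      ring

lemma qlspMat_inv_eq (q N : ℕ) (hq : 1 ≤ q) (π : Fin q → Equiv.Perm (Fin N)) :
    (qlspMat q N π)⁻¹ = invB q N π :=
  Matrix.inv_eq_right_inv (qlspMat_mul_invB q N hq π)

lemma iterate_step_zero (q N : ℕ) (hq : 1 ≤ q) (hN : 0 < N) (π : Fin q → Equiv.Perm (Fin N))
    {k : ℕ} (hk : k < 3*q) :
    (stepFn q N π)^[k] (⟨0, by omega⟩, ⟨0, hN⟩) =
      (⟨k, hk⟩, xvec q N hN π k) := by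
  have h0 : (⟨0, hN⟩ : Fin N) = Gp q N π 0 ⟨0, hN⟩ := by
    rw [Gp_early q N π (Nat.zero_le q)]; rfl
  conv_lhs => rw [h0]
  rw [iterate_step_Gp q N hq π k (by omega : 0 < 3*q)]
  have hmod : (0+k) % (3*q) = k := by rw [Nat.zero_add, Nat.mod_eq_of_lt hk]
  simp only [hmod, xvec_eq_Gp]

lemma geomP_apply_zero (q N : ℕ) (hq : 1 ≤ q) (hN : 0 < N) (π : Fin q → Equiv.Perm (Fin N))
    (r : Fin (3*q) × Fin N) :
    geomP q N π r (⟨0, Nat.mul_pos (by norm_num) hq⟩, ⟨0, hN⟩) =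
      (tC q)^(r.1 : ℕ) * (if r.2 = xvec q N hN π (r.1 : ℕ) then 1 else 0) := by
  unfold geomP
  rw [Matrix.sum_apply]
  simp only [Matrix.smul_apply, permMat_pow_apply, smul_eq_mul]
  rw [Finset.sum_eq_single_of_mem ((r.1 : ℕ)) (Finset.mem_range.2 r.1.isLt)]
  · rw [iterate_step_zero q N hq hN π r.1.isLt]
    congr 1
    by_cases h : r.2 = xvec q N hN π (r.1 : ℕ)
    · rw [if_pos h, if_pos]
      exact Prod.ext (Fin.ext rfl) h
    · rw [if_neg h, if_neg]
      intro hcon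
      exact h (congrArg Prod.snd hcon)
  · intro k hk hkne
    rw [iterate_step_zero q N hq hN π (Finset.mem_range.1 hk), if_neg, mul_zero]
    intro hcon
    exact hkne (congrArg (fun z => ((Prod.fst z : Fin (3*q)) : ℕ)) hcon).symm

end QLSPAux

/-- For every index `(b, j, x)`, the `(b,j,x)`-coordinate of the vector
`A⁻¹ e_{(0,0,0)}` is nonzero if and only if `b = 1` and `x = x_j`. -/
theorem qlspMat_inv_mulVec_single_ne_zero_iff (q N : ℕ) (hq : 1 ≤ q) (hN : 1 ≤ N)
    (π : Fin q → Equiv.Perm (Fin N)) (p : Fin 2 × Fin (3 * q) × Fin N) :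
    (qlspMat q N π)⁻¹.mulVec
        (Pi.single ((0 : Fin 2), (⟨0, by omega⟩ : Fin (3 * q)),
          (⟨0, by omega⟩ : Fin N)) 1) p ≠ 0 ↔
      p.1 = 1 ∧ p.2.2 = xvec q N hN π (p.2.1 : ℕ) := by
  classical
  rw [QLSPAux.qlspMat_inv_eq q N hq π]
  have hs := QLSPAux.one_sub_tC_pow_ne_zero q hq (3*q) (by omega)
  have hc := QLSPAux.onePlus_ne_zero q
  simp only [Matrix.mulVec_single, MulOpposite.op_one, one_smul, Matrix.col_apply, mul_one]
  simp only [QLSPAux.invB, Matrix.of_apply]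
  have f01 : ((0:Fin 2) = 1) = False := by simp
  have t00 : ((0:Fin 2) = 0) = True := by simp
  simp only [f01, t00, and_true, and_false, if_false, ite_false]
  rw [QLSPAux.geomP_apply_zero q N hq hN π p.2]
  have hconst : ((((1 : ℝ) + Real.exp (-1 / q)) : ℝ) : ℂ) *
      ((1 : ℂ) - (QLSPAux.tC q)^(3*q))⁻¹ ≠ 0 :=
    mul_ne_zero hc (inv_ne_zero hs)
  by_cases hb : p.1 = 1
  · rw [if_pos hb]
    constructor
    · intro h
      refine ⟨hb, ?_⟩
      by_contra hx
      rw [if_neg hx, mul_zero, mul_zero] at h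
      exact h rfl
    · rintro ⟨-, hx⟩
      rw [if_pos hx, mul_one]
      exact mul_ne_zero hconst (pow_ne_zero _ (QLSPAux.tC_ne_zero q))
  · rw [if_neg hb, mul_zero]
    simp [hb]
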